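/- Let ν be a normal weight on [0,1) and let f(z) = ∑_{n≥0} a_n z^n be analytic on the unit disk with (a_n) nonnegative and non-increasing. Then f ∈ B_ν if and only if sup_{n≥1} n² ν(1-1/n) a_n < ∞, and ‖f‖_{B_ν} is comparable to a_0 + sup_{n≥1} n² ν(1-1/n) a_n. -/

import Mathlib

open MeasureTheory Set Filter

/-- `g` is almost decreasing on `s`. -/
def AlmostDecreasingOn (g : ℝ → ℝ) (s : Set ℝ) : Prop :=
  ∃ C > 0, ∀ x ∈ s, ∀ y ∈ s, x < y → g y ≤ C * g x

/-- `g` is almost increasing on `s`. -/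
def AlmostIncreasingOn (g : ℝ → ℝ) (s : Set ℝ) : Prop :=
  ∃ C > 0, ∀ x ∈ s, ∀ y ∈ s, x < y → g x ≤ C * g y

/-- `ν` is a normal weight on `[0,1)` with exponents `a ≤ b`. -/
def IsNormal (ν : ℝ → ℝ) (a b : ℝ) : Prop :=
  0 < a ∧ a ≤ b ∧ (∀ s ∈ Ico (0:ℝ) 1, 0 < ν s) ∧ ContinuousOn ν (Ico 0 1) ∧
  AlmostDecreasingOn (fun s => ν s / (1 - s ^ 2) ^ a) (Ico 0 1) ∧
  AlmostIncreasingOn (fun s => ν s / (1 - s ^ 2) ^ b) (Ico 0 1)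

/-- Membership in the normal-weight Bloch space `B_ν`. -/
def MemBloch (ν : ℝ → ℝ) (f : ℂ → ℂ) : Prop :=
  DifferentiableOn ℂ f (Metric.ball 0 1) ∧
  BddAbove (Set.range fun z : Metric.ball (0:ℂ) 1 => ν ‖(z : ℂ)‖ * ‖deriv f z‖)

/-- The Bloch norm `|f(0)| + sup ν(|z|)|f'(z)|`. -/
noncomputable def blochNorm (ν : ℝ → ℝ) (f : ℂ → ℂ) : ℝ :=
  ‖f 0‖ + ⨆ z : Metric.ball (0:ℂ) 1, ν ‖(z : ℂ)‖ * ‖deriv f z‖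

/-- `ω̃(t) = ∫_0^t ds/ω(s)`. -/
noncomputable def tildeW (ω : ℝ → ℝ) (t : ℝ) : ℝ := ∫ s in (0:ℝ)..t, 1 / ω s

/-- The generalized integral type Hilbert operator `I_{μ,α+1}`. -/
noncomputable def intHilbert (μ : Measure ℝ) (α : ℝ) (f : ℂ → ℂ) (z : ℂ) : ℂ :=
  ∫ t in Ico (0:ℝ) 1, f (t : ℂ) / (1 - (t : ℂ) * z) ^ ((α : ℂ) + 1) ∂μ

/-- The sublinear generalized integral type Hilbert operator. -/
noncomputable def tildeIntHilbert (μ : Measure ℝ) (α : ℝ) (f : ℂ → ℂ) (z : ℂ) : ℂ :=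
  ∫ t in Ico (0:ℝ) 1, (‖f (t : ℂ)‖ : ℂ) / (1 - (t : ℂ) * z) ^ ((α : ℂ) + 1) ∂μ

/-- Boundedness of an operator from `B_{ν₁}` to `B_{ν₂}`. -/
def IsBddOp (ν₁ ν₂ : ℝ → ℝ) (T : (ℂ → ℂ) → ℂ → ℂ) : Prop :=
  ∃ C > 0, ∀ f, MemBloch ν₁ f → MemBloch ν₂ (T f) ∧ blochNorm ν₂ (T f) ≤ C * blochNorm ν₁ f

/-- Compactness of an operator from `B_{ν₁}` to `B_{ν₂}` (sequential characterization). -/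
def IsCompactOp (ν₁ ν₂ : ℝ → ℝ) (T : (ℂ → ℂ) → ℂ → ℂ) : Prop :=
  IsBddOp ν₁ ν₂ T ∧
  ∀ (h : ℕ → ℂ → ℂ) (M : ℝ), (∀ k, MemBloch ν₁ (h k) ∧ blochNorm ν₁ (h k) ≤ M) →
    TendstoLocallyUniformlyOn (fun k z => h k z) (fun _ => 0) atTop (Metric.ball (0:ℂ) 1) →
    Tendsto (fun k => blochNorm ν₂ (T (h k))) atTop (nhds 0)

lemma aux_pow_mul_fact_le (m n : ℕ) : (n+1)^m * n.factorial ≤ (n+m).factorial := by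
  induction m with
  | zero => simp
  | succ m ih =>
    calc (n+1)^(m+1) * n.factorial = (n+1) * ((n+1)^m * n.factorial) := by ring
    _ ≤ (n+1) * (n+m).factorial := Nat.mul_le_mul_left _ ih
    _ ≤ (n+m+1) * (n+m).factorial := Nat.mul_le_mul_right _ (by omega)
    _ = (n+(m+1)).factorial := by rw [show n+(m+1) = (n+m)+1 from rfl, Nat.factorial_succ]

lemma aux_fact_le_pow_mul (m n : ℕ) : (n+m).factorial ≤ (n+m)^m * n.factorial := by
  induction m with
  | zero => simp
  | succ m ih =>
    calc (n+(m+1)).factorial = (n+m+1) * (n+m).factorial := by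
          rw [show n+(m+1) = (n+m)+1 from rfl, Nat.factorial_succ]
    _ ≤ (n+m+1) * ((n+m)^m * n.factorial) := Nat.mul_le_mul_left _ ih
    _ ≤ (n+(m+1)) * ((n+(m+1))^m * n.factorial) := by
          have h1 : n+m ≤ n+(m+1) := by omega
          exact Nat.mul_le_mul (by omega) (Nat.mul_le_mul_right _ (Nat.pow_le_pow_left h1 m))
    _ = (n+(m+1))^(m+1) * n.factorial := by ring

lemma aux_pow_le_fact_mul_choose (m n : ℕ) : (n+1)^m ≤ m.factorial * ((n+m).choose m) := by
  have h := Nat.choose_mul_factorial_mul_factorial (Nat.le_add_left m n)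
  rw [show n+m-m = n from by omega] at h
  have h2 : (n+1)^m * n.factorial ≤ ((n+m).choose m * m.factorial) * n.factorial := by
    rw [h]; exact aux_pow_mul_fact_le m n
  have h3 := Nat.le_of_mul_le_mul_right h2 n.factorial_pos
  calc (n+1)^m ≤ (n+m).choose m * m.factorial := h3
  _ = m.factorial * (n+m).choose m := Nat.mul_comm _ _
  
lemma aux_choose_le_pow (m n : ℕ) : (n+m).choose m ≤ (n+m)^m := by
  have h := Nat.choose_mul_factorial_mul_factorial (Nat.le_add_left m n)
  rw [show n+m-m = n from by omega] at h
  have h2 : ((n+m).choose m * m.factorial) * n.factorial ≤ ((n+m)^m * m.factorial) * n.factorial := by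
    rw [h]
    calc (n+m).factorial ≤ (n+m)^m * n.factorial := aux_fact_le_pow_mul m n
    _ ≤ (n+m)^m * (m.factorial * n.factorial) := by
        exact Nat.mul_le_mul_left _ (Nat.le_mul_of_pos_left _ m.factorial_pos)
    _ = (n+m)^m * m.factorial * n.factorial := by ring
  have h3 := Nat.le_of_mul_le_mul_right h2 n.factorial_pos
  exact Nat.le_of_mul_le_mul_right h3 m.factorial_pos

lemma summable_add_one_pow_mul_geometric {r : ℝ} (h0 : 0 ≤ r) (h1 : r < 1) (m : ℕ) :
    Summable (fun n : ℕ => ((n:ℝ)+1)^m * r ^ n) := by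
  have hr : ‖r‖ < 1 := by rwa [Real.norm_eq_abs, abs_of_nonneg h0]
  have key : ∀ n : ℕ, ((n:ℝ)+1)^m * r ^ n
      = ∑ j ∈ Finset.range (m+1), (m.choose j : ℝ) * ((n:ℝ)^j * r^n) := by
    intro n
    rw [add_pow, Finset.sum_mul]
    refine Finset.sum_congr rfl fun j hj => by ring
  rw [funext key]
  exact summable_sum fun j _ =>
    ((summable_pow_mul_geometric_of_norm_lt_one j hr).mul_left _)

lemma summable_choose_mul_geometric {r : ℝ} (h0 : 0 ≤ r) (h1 : r < 1) (m : ℕ) :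
    Summable (fun n : ℕ => (((n+m).choose m : ℕ) : ℝ) * r ^ n) := by
  refine Summable.of_nonneg_of_le (fun n => by positivity) (fun n => ?_)
    (((summable_add_one_pow_mul_geometric h0 h1 m).mul_left ((m+1:ℝ)^m)))
  have h2 : (((n+m).choose m : ℕ) : ℝ) ≤ (((n+m)^m : ℕ) : ℝ) := by
    exact_mod_cast aux_choose_le_pow m n
  have h3 : (((n+m)^m : ℕ) : ℝ) ≤ ((m:ℝ)+1)^m * ((n:ℝ)+1)^m := by
    push_cast
    rw [← mul_pow]
    refine pow_le_pow_left₀ (by positivity) (by nlinarith [Nat.cast_nonneg (α := ℝ) n, Nat.cast_nonneg (α := ℝ) m]) m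
  have hrn : (0:ℝ) ≤ r ^ n := by positivity
  calc (((n+m).choose m : ℕ) : ℝ) * r ^ n ≤ (((m:ℝ)+1)^m * ((n:ℝ)+1)^m) * r^n := by
        exact mul_le_mul_of_nonneg_right (h2.trans h3) hrn
  _ = ((m:ℝ)+1)^m * (((n:ℝ)+1)^m * r^n) := by ring

lemma hasSum_choose_mul_geometric {r : ℝ} (h0 : 0 ≤ r) (h1 : r < 1) (m : ℕ) :
    HasSum (fun n : ℕ => (((n+m).choose m : ℕ) : ℝ) * r ^ n) (1 / (1-r)^(m+1)) := by
  induction m with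
  | zero => simpa using hasSum_geometric_of_lt_one h0 h1
  | succ m ih =>
    have hs := summable_choose_mul_geometric h0 h1 (m+1)
    have h1r : (0:ℝ) < 1 - r := by linarith
    -- second piece summable
    have hs2 : Summable (fun n : ℕ => (((n+m).choose (m+1) : ℕ) : ℝ) * r ^ n) := by
      refine Summable.of_nonneg_of_le (fun n => by positivity) (fun n => ?_) hs
      have : ((n+m).choose (m+1)) ≤ ((n+(m+1)).choose (m+1)) :=
        Nat.choose_le_choose _ (by omega)
      exact mul_le_mul_of_nonneg_right (by exact_mod_cast this) (by positivity)
    set T := ∑' n : ℕ, (((n+(m+1)).choose (m+1) : ℕ) : ℝ) * r ^ n with hT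
    have hshift : ∑' n : ℕ, (((n+m).choose (m+1) : ℕ) : ℝ) * r ^ n = r * T := by
      rw [Summable.tsum_eq_zero_add hs2]
      have hz : (((0+m).choose (m+1) : ℕ) : ℝ) * r ^ 0 = 0 := by
        rw [Nat.choose_eq_zero_of_lt (by omega)]; simp
      rw [hz, zero_add, hT, ← tsum_mul_left]
      refine tsum_congr fun n => ?_
      rw [show n+1+m = n+(m+1) from by omega]
      ring
    have hTeq : T = 1 / (1-r)^(m+1) + r * T := by
      rw [hT, ← ih.tsum_eq, ← hshift, ← Summable.tsum_add ih.summable hs2]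
      refine tsum_congr fun n => ?_
      rw [show n+(m+1) = (n+m)+1 from by omega, Nat.choose_succ_succ (n+m) m]
      push_cast; ring
    have hTval : T = 1 / (1-r)^(m+2) := by
      have h2 : T * (1-r) = 1 / (1-r)^(m+1) := by nlinarith [hTeq]
      have h3 : (1-r)^(m+1) ≠ 0 := by positivity
      field_simp at h2 ⊢
      calc T * (1-r)^(m+2) = T * (1-r) * (1-r)^(m+1) := by ring
      _ = 1 := h2
    have := hs.hasSum
    rw [← hT, hTval] at this
    exact this

lemma tsum_add_one_pow_mul_geometric_le {r : ℝ} (h0 : 0 ≤ r) (h1 : r < 1) (m : ℕ) :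
    ∑' n : ℕ, ((n:ℝ)+1)^m * r ^ n ≤ (m.factorial : ℝ) / (1-r)^(m+1) := by
  have hb := hasSum_choose_mul_geometric h0 h1 m
  have h2 : ∑' n : ℕ, ((n:ℝ)+1)^m * r ^ n
      ≤ ∑' n : ℕ, (m.factorial : ℝ) * ((((n+m).choose m : ℕ) : ℝ) * r ^ n) := by
    refine Summable.tsum_le_tsum (fun n => ?_) (summable_add_one_pow_mul_geometric h0 h1 m)
      (hb.summable.mul_left _)
    have : ((n:ℝ)+1)^m ≤ (m.factorial : ℝ) * (((n+m).choose m : ℕ) : ℝ) := by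
      exact_mod_cast aux_pow_le_fact_mul_choose m n
    rw [← mul_assoc]
    exact mul_le_mul_of_nonneg_right this (by positivity)
  rw [tsum_mul_left, hb.tsum_eq] at h2
  calc ∑' n : ℕ, ((n:ℝ)+1)^m * r ^ n ≤ (m.factorial : ℝ) * (1 / (1-r)^(m+1)) := h2
  _ = (m.factorial : ℝ) / (1-r)^(m+1) := by ring

lemma aux_mvt_rpow {a : ℝ} (ha : 0 < a) (ha1 : a ≤ 1) {n : ℕ} (hn : 1 ≤ n) :
    a * ((n:ℝ)+1) ^ (a-1) ≤ ((n:ℝ)+1) ^ a - (n:ℝ) ^ a := by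
  set x := (n:ℝ) with hx
  have hx1 : (1:ℝ) ≤ x := by rw [hx]; exact_mod_cast hn
  have hlt : x < x + 1 := by linarith
  have hcont : ContinuousOn (fun t : ℝ => t ^ a) (Icc x (x+1)) := by
    intro t ht
    have ht0 : (0:ℝ) < t := lt_of_lt_of_le (by linarith) ht.1
    exact (Real.continuousAt_rpow_const t a (Or.inl ht0.ne')).continuousWithinAt
  have hderiv : ∀ t ∈ Ioo x (x+1), HasDerivAt (fun t : ℝ => t ^ a) (a * t ^ (a-1)) t := by
    intro t ht
    have ht0 : (0:ℝ) < t := by have := ht.1; linarith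
    simpa [mul_comm] using Real.hasDerivAt_rpow_const (x := t) (p := a) (Or.inl ht0.ne')
  obtain ⟨ξ, hξ, heq⟩ := exists_hasDerivAt_eq_slope (fun t : ℝ => t ^ a)
    (fun t => a * t ^ (a-1)) hlt hcont hderiv
  have hs : (x+1) - x = 1 := by ring
  rw [hs, div_one] at heq
  have hξ0 : 0 < ξ := lt_of_le_of_lt (by linarith : (0:ℝ) ≤ x) hξ.1
  have hmono : (x+1) ^ (a-1) ≤ ξ ^ (a-1) :=
    Real.rpow_le_rpow_of_nonpos hξ0 hξ.2.le (by linarith)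
  calc a * (x+1) ^ (a-1) ≤ a * ξ ^ (a-1) :=
        mul_le_mul_of_nonneg_left hmono ha.le
  _ = (x+1) ^ a - x ^ a := heq

lemma aux_sum_rpow_le {a : ℝ} (ha : 0 < a) (ha1 : a ≤ 1) (N : ℕ) :
    ∑ n ∈ Finset.range N, ((n:ℝ)+1) ^ (a-1) ≤ (1 + 1/a) * (N:ℝ) ^ a := by
  induction N with
  | zero => simp [Real.zero_rpow ha.ne']
  | succ N ih =>
    rw [Finset.sum_range_succ]
    rcases Nat.eq_zero_or_pos N with rfl|hN
    · have : ((0:ℕ):ℝ) + 1 = 1 := by norm_num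
      rw [this]
      simp only [Finset.range_zero, Finset.sum_empty, zero_add]
      rw [Real.one_rpow]
      push_cast
      rw [Real.one_rpow]
      have : 0 < 1/a := by positivity
      linarith
    · have hmvt := aux_mvt_rpow ha ha1 hN
      have key : ((N:ℝ)+1) ^ (a-1) ≤ (1 + 1/a) * (((N:ℝ)+1) ^ a - (N:ℝ) ^ a) := by
        have h2 : ((N:ℝ)+1) ^ (a-1) ≤ (1/a) * (((N:ℝ)+1) ^ a - (N:ℝ) ^ a) := by
          have := mul_le_mul_of_nonneg_left hmvt (le_of_lt (show (0:ℝ) < 1/a by positivity))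
          calc ((N:ℝ)+1) ^ (a-1) = (1/a) * (a * ((N:ℝ)+1) ^ (a-1)) := by
                field_simp
          _ ≤ (1/a) * (((N:ℝ)+1) ^ a - (N:ℝ) ^ a) := this
        have h3 : (0:ℝ) ≤ ((N:ℝ)+1) ^ a - (N:ℝ) ^ a := by
          have := Real.rpow_le_rpow (by positivity : (0:ℝ) ≤ (N:ℝ)) (by linarith : (N:ℝ) ≤ (N:ℝ)+1) ha.le
          linarith
        nlinarith
      push_cast
      nlinarith [ih, key]

lemma aux_pow_lower {N : ℕ} (hN : 2 ≤ N) : Real.exp (-2) ≤ (1 - 1/(N:ℝ)) ^ N := by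
  have hx : (2:ℝ) ≤ (N:ℝ) := by exact_mod_cast hN
  have hx1 : (0:ℝ) < (N:ℝ) - 1 := by linarith
  have hxN : (0:ℝ) < (N:ℝ) := by linarith
  have h1 : Real.exp (-(1/((N:ℝ)-1))) ≤ 1 - 1/(N:ℝ) := by
    have h2 : 1 + 1/((N:ℝ)-1) ≤ Real.exp (1/((N:ℝ)-1)) := by
      have := Real.add_one_le_exp (1/((N:ℝ)-1)); linarith
    have h3 : 1 + 1/((N:ℝ)-1) = (N:ℝ)/((N:ℝ)-1) := by field_simp; ring
    rw [Real.exp_neg]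
    rw [h3] at h2
    have h4 : (0:ℝ) < (N:ℝ)/((N:ℝ)-1) := by positivity
    have h5 := one_div_le_one_div_of_le h4 h2
    have h6 : 1/((N:ℝ)/((N:ℝ)-1)) = 1 - 1/(N:ℝ) := by field_simp
    rw [← h6]
    simpa [one_div] using h5
  have h7 : Real.exp (-(1/((N:ℝ)-1))) ^ N ≤ (1 - 1/(N:ℝ)) ^ N :=
    pow_le_pow_left₀ (Real.exp_nonneg _) h1 N
  refine le_trans ?_ h7
  rw [← Real.exp_nat_mul]
  apply Real.exp_le_exp.2
  rw [mul_neg]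
  have h8 : (N:ℝ)/((N:ℝ)-1) ≤ 2 := by
    rw [div_le_iff₀ hx1]; linarith
  have : (N:ℝ) * (1/((N:ℝ)-1)) = (N:ℝ)/((N:ℝ)-1) := by ring
  rw [this]
  linarith

lemma aux_gauss (N : ℕ) : ∑ n ∈ Finset.range N, ((n:ℝ)+1) = (N:ℝ)*((N:ℝ)+1)/2 := by
  induction N with
  | zero => simp
  | succ N ih => rw [Finset.sum_range_succ, ih]; push_cast; ring

lemma aux_one_sub_sq_pos {x : ℝ} (hx : x ∈ Ico (0:ℝ) 1) : 0 < 1 - x^2 := by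
  obtain ⟨h0, h1⟩ := hx; nlinarith

lemma aux_one_sub_sq_le {x y : ℝ} (hx : x ∈ Ico (0:ℝ) 1) (hy : y ∈ Ico (0:ℝ) 1)
    (hxy : x ≤ y) : 1 - y^2 ≤ 1 - x^2 := by
  obtain ⟨hx0, _⟩ := hx; nlinarith

lemma almost_dec' {ν : ℝ → ℝ} {a : ℝ} (ha : 0 < a)
    (hpos : ∀ s ∈ Ico (0:ℝ) 1, 0 < ν s)
    (h : AlmostDecreasingOn (fun s => ν s / (1 - s ^ 2) ^ a) (Ico 0 1)) :
    ∃ C > 0, ∀ x ∈ Ico (0:ℝ) 1, ∀ y ∈ Ico (0:ℝ) 1, x ≤ y →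
      ν y * (1 - x ^ 2) ^ (min a 1) ≤ C * (ν x * (1 - y ^ 2) ^ (min a 1)) := by
  obtain ⟨C, hC, hCle⟩ := h
  refine ⟨max C 1, by positivity, ?_⟩
  intro x hx y hy hxy
  have px : (0:ℝ) < 1 - x^2 := aux_one_sub_sq_pos hx
  have py : (0:ℝ) < 1 - y^2 := aux_one_sub_sq_pos hy
  rcases eq_or_lt_of_le hxy with rfl|hlt
  · have : (0:ℝ) ≤ ν x * (1 - x^2) ^ (min a 1) := by
      have := hpos x hx; positivity
    nlinarith [le_max_right C 1]
  · have h2 := hCle x hx y hy hlt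
    simp only at h2
    -- clear denominators : ν y * (1-x²)^a ≤ C * (ν x * (1-y²)^a)
    have h3 : ν y * (1 - x^2) ^ a ≤ C * (ν x * (1 - y^2) ^ a) := by
      rw [div_le_iff₀ (by positivity)] at h2
      have := mul_le_mul_of_nonneg_right h2 (le_of_lt (Real.rpow_pos_of_pos px a))
      calc ν y * (1 - x^2)^a = (C * (ν x / (1-x^2)^a) * (1-y^2)^a) * (1-x^2)^a
            - (C * (ν x / (1-x^2)^a) * (1-y^2)^a - ν y) * (1-x^2)^a := by ring
      _ ≤ (C * (ν x / (1-x^2)^a) * (1-y^2)^a) * (1-x^2)^a := by nlinarith [this]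
      _ = C * (ν x * (1-y^2)^a) := by
          field_simp
    -- exponent shift from a to min a 1
    have hyx : 1 - y^2 ≤ 1 - x^2 := aux_one_sub_sq_le hx hy hxy
    have hma : min a 1 - a ≤ 0 := by
      have := min_le_left a 1; linarith
    have hmono : (1 - x^2) ^ (min a 1 - a) ≤ (1 - y^2) ^ (min a 1 - a) :=
      Real.rpow_le_rpow_of_nonpos py hyx hma
    have step := mul_le_mul_of_nonneg_right h3
      (Real.rpow_nonneg px.le (min a 1 - a))
    have e1 : (1 - x^2) ^ a * (1 - x^2) ^ (min a 1 - a) = (1 - x^2) ^ (min a 1) := by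
      rw [← Real.rpow_add px]; ring_nf
    have e2 : (1 - y^2) ^ a * (1 - y^2) ^ (min a 1 - a) = (1 - y^2) ^ (min a 1) := by
      rw [← Real.rpow_add py]; ring_nf
    calc ν y * (1 - x^2) ^ (min a 1) = ν y * (1 - x^2) ^ a * (1 - x^2) ^ (min a 1 - a) := by
          rw [mul_assoc, e1]
    _ ≤ C * (ν x * (1 - y^2) ^ a) * (1 - x^2) ^ (min a 1 - a) := step
    _ ≤ C * (ν x * (1 - y^2) ^ a) * (1 - y^2) ^ (min a 1 - a) := by
        refine mul_le_mul_of_nonneg_left hmono ?_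
        have := hpos x hx
        positivity
    _ = C * (ν x * (1 - y^2) ^ (min a 1)) := by
        rw [mul_assoc, mul_assoc, e2]
    _ ≤ max C 1 * (ν x * (1 - y^2) ^ (min a 1)) := by
        refine mul_le_mul_of_nonneg_right (le_max_left C 1) ?_
        have := hpos x hx
        positivity

lemma almost_inc' {ν : ℝ → ℝ} {b β : ℝ} (hb : 0 < b) (hβ : b ≤ β)
    (hpos : ∀ s ∈ Ico (0:ℝ) 1, 0 < ν s)
    (h : AlmostIncreasingOn (fun s => ν s / (1 - s ^ 2) ^ b) (Ico 0 1)) :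
    ∃ C > 0, ∀ x ∈ Ico (0:ℝ) 1, ∀ y ∈ Ico (0:ℝ) 1, x ≤ y →
      ν x * (1 - y ^ 2) ^ β ≤ C * (ν y * (1 - x ^ 2) ^ β) := by
  obtain ⟨C, hC, hCle⟩ := h
  refine ⟨max C 1, by positivity, ?_⟩
  intro x hx y hy hxy
  have px : (0:ℝ) < 1 - x^2 := aux_one_sub_sq_pos hx
  have py : (0:ℝ) < 1 - y^2 := aux_one_sub_sq_pos hy
  rcases eq_or_lt_of_le hxy with rfl|hlt
  · have : (0:ℝ) ≤ ν x * (1 - x^2) ^ β := by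
      have := hpos x hx; positivity
    nlinarith [le_max_right C 1]
  · have h2 := hCle x hx y hy hlt
    simp only at h2
    have h3 : ν x * (1 - y^2) ^ b ≤ C * (ν y * (1 - x^2) ^ b) := by
      rw [div_le_iff₀ (by positivity)] at h2
      have := mul_le_mul_of_nonneg_right h2 (le_of_lt (Real.rpow_pos_of_pos py b))
      calc ν x * (1 - y^2)^b = (C * (ν y / (1-y^2)^b) * (1-x^2)^b) * (1-y^2)^b
            - (C * (ν y / (1-y^2)^b) * (1-x^2)^b - ν x) * (1-y^2)^b := by ring
      _ ≤ (C * (ν y / (1-y^2)^b) * (1-x^2)^b) * (1-y^2)^b := by nlinarith [this]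
      _ = C * (ν y * (1-x^2)^b) := by
          field_simp
    have hyx : 1 - y^2 ≤ 1 - x^2 := aux_one_sub_sq_le hx hy hxy
    have hmono : (1 - y^2) ^ (β - b) ≤ (1 - x^2) ^ (β - b) :=
      Real.rpow_le_rpow py.le hyx (by linarith)
    have step := mul_le_mul_of_nonneg_right h3
      (Real.rpow_nonneg py.le (β - b))
    have e1 : (1 - y^2) ^ b * (1 - y^2) ^ (β - b) = (1 - y^2) ^ β := by
      rw [← Real.rpow_add py]; ring_nf
    have e2 : (1 - x^2) ^ b * (1 - x^2) ^ (β - b) = (1 - x^2) ^ β := by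
      rw [← Real.rpow_add px]; ring_nf
    calc ν x * (1 - y^2) ^ β = ν x * (1 - y^2) ^ b * (1 - y^2) ^ (β - b) := by
          rw [mul_assoc, e1]
    _ ≤ C * (ν y * (1 - x^2) ^ b) * (1 - y^2) ^ (β - b) := step
    _ ≤ C * (ν y * (1 - x^2) ^ b) * (1 - x^2) ^ (β - b) := by
        refine mul_le_mul_of_nonneg_left hmono ?_
        have := hpos y hy
        positivity
    _ = C * (ν y * (1 - x^2) ^ β) := by
        rw [mul_assoc, mul_assoc, e2]
    _ ≤ max C 1 * (ν y * (1 - x^2) ^ β) := by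
        refine mul_le_mul_of_nonneg_right (le_max_left C 1) ?_
        have := hpos y hy
        positivity

lemma aux_sn_mem (n : ℕ) : (1 - 1/((n:ℝ)+1)) ∈ Ico (0:ℝ) 1 := by
  constructor
  · have h1 : 1/((n:ℝ)+1) ≤ 1 := by
      rw [div_le_one (by positivity)]
      have : (0:ℝ) ≤ (n:ℝ) := Nat.cast_nonneg n
      linarith
    linarith
  · have : (0:ℝ) < 1/((n:ℝ)+1) := by positivity
    linarith

lemma core_upper (ν : ℝ → ℝ) (a b : ℝ) (hν : IsNormal ν a b) :
    ∃ K > 0, ∀ (M : ℝ) (c : ℕ → ℝ), 0 ≤ M → (∀ n, 0 ≤ c n) →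
      (∀ n : ℕ, ((n:ℝ)+1)^2 * ν (1 - 1/((n:ℝ)+1)) * c (n+1) ≤ M) →
      ∀ ρ, 0 ≤ ρ → ρ < 1 → (ν ρ) * ∑' n : ℕ, ((n:ℝ)+1) * c (n+1) * ρ^n ≤ K * M := by
  obtain ⟨ha, hab, hpos, _, hdec, hinc⟩ := hν
  set a₁ := min a 1 with ha₁def
  have ha₁ : 0 < a₁ := lt_min ha one_pos
  have ha₁1 : a₁ ≤ 1 := min_le_right a 1
  have hb : 0 < b := lt_of_lt_of_le ha hab
  set m : ℕ := ⌈b⌉₊ - 1 with hmdef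
  have hmb : b ≤ (m:ℝ) + 1 := by
    have h1 : 1 ≤ ⌈b⌉₊ := Nat.one_le_ceil_iff.2 hb
    have h2 : m + 1 = ⌈b⌉₊ := by omega
    have := Nat.le_ceil b
    calc b ≤ (⌈b⌉₊ : ℝ) := this
    _ = ((m+1 : ℕ) : ℝ) := by rw [h2]
    _ = (m:ℝ) + 1 := by push_cast; ring
  obtain ⟨C₁, hC₁, hD⟩ := almost_dec' ha hpos hdec
  obtain ⟨C₂, hC₂, hI⟩ := almost_inc' hb hmb hpos hinc
  refine ⟨C₁ * (2:ℝ)^a₁ * ((2:ℝ)^a₁ * (1 + 1/a₁)) + C₂ * 2^(m+1) * (m.factorial : ℝ),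
    by positivity, ?_⟩
  intro M c hM hc hcm ρ hρ0 hρ1
  have hρm : ρ ∈ Ico (0:ℝ) 1 := ⟨hρ0, hρ1⟩
  have h1ρ : (0:ℝ) < 1 - ρ := by linarith
  have hνρ : 0 < ν ρ := hpos ρ hρm
  -- the inner general bound
  have key : ∀ (n : ℕ) (Cg e : ℝ), 0 ≤ Cg → 0 < e →
      ν ρ * (1 - (1 - 1/((n:ℝ)+1))^2) ^ e ≤ Cg * (ν (1 - 1/((n:ℝ)+1)) * (1 - ρ^2) ^ e) →
      ν ρ * (((n:ℝ)+1) * c (n+1) * ρ^n) ≤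
        M * (Cg * (2:ℝ)^e * (1-ρ)^e * (((n:ℝ)+1):ℝ)^(e-1) * ρ^n) := by
    intro n Cg e hCg he hratio
    set s := 1 - 1/((n:ℝ)+1) with hsdef
    have hsm : s ∈ Ico (0:ℝ) 1 := aux_sn_mem n
    have hn1 : (0:ℝ) < (n:ℝ)+1 := by positivity
    have hνs : 0 < ν s := hpos s hsm
    have hs2 : (0:ℝ) < 1 - s^2 := aux_one_sub_sq_pos hsm
    have hsub : ((n:ℝ)+1) * (1 - s^2) ≥ 1 := by
      have h2 : 1 - s^2 = (1-s)*(1+s) := by ring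
      have h3 : 1 - s = 1/((n:ℝ)+1) := by rw [hsdef]; ring
      have h4 : (1:ℝ) ≤ 1 + s := by have := hsm.1; linarith
      calc ((n:ℝ)+1) * (1 - s^2) = ((n:ℝ)+1) * ((1-s)*(1+s)) := by rw [h2]
      _ = (((n:ℝ)+1) * (1/((n:ℝ)+1))) * (1+s) := by rw [h3]; ring
      _ = 1 + s := by field_simp
      _ ≥ 1 := h4
    -- step 1 : ν ρ ≤ Cg * 2^e * (1-ρ)^e * (n+1)^e * ν s
    have step1 : ν ρ ≤ Cg * (2:ℝ)^e * (1-ρ)^e * ((n:ℝ)+1)^e * ν s := by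
      have hA : (1:ℝ) ≤ (((n:ℝ)+1) * (1 - s^2)) ^ e := by
        calc (1:ℝ) = (1:ℝ) ^ e := (Real.one_rpow e).symm
        _ ≤ (((n:ℝ)+1) * (1 - s^2)) ^ e := Real.rpow_le_rpow zero_le_one hsub he.le
      have hA' : (1:ℝ) ≤ ((n:ℝ)+1)^e * (1 - s^2)^e := by
        rwa [Real.mul_rpow hn1.le hs2.le] at hA
      have hB : (1 - ρ^2) ^ e ≤ (2:ℝ)^e * (1-ρ)^e := by
        rw [← Real.mul_rpow (by norm_num) h1ρ.le]
        exact Real.rpow_le_rpow (by nlinarith) (by nlinarith) he.le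
      calc ν ρ = ν ρ * 1 := (mul_one _).symm
      _ ≤ ν ρ * (((n:ℝ)+1)^e * (1 - s^2)^e) := by
          exact mul_le_mul_of_nonneg_left hA' hνρ.le
      _ = (ν ρ * (1 - s^2)^e) * ((n:ℝ)+1)^e := by ring
      _ ≤ (Cg * (ν s * (1 - ρ^2)^e)) * ((n:ℝ)+1)^e := by
          exact mul_le_mul_of_nonneg_right hratio (Real.rpow_nonneg hn1.le e)
      _ ≤ (Cg * (ν s * ((2:ℝ)^e * (1-ρ)^e))) * ((n:ℝ)+1)^e := by
          refine mul_le_mul_of_nonneg_right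
            (mul_le_mul_of_nonneg_left (mul_le_mul_of_nonneg_left hB hνs.le) hCg)
            (Real.rpow_nonneg hn1.le e)
      _ = Cg * (2:ℝ)^e * (1-ρ)^e * ((n:ℝ)+1)^e * ν s := by ring
    -- step 2 : combine with coefficient bound
    have hcoef := hcm n
    have hterm : ν ρ * (((n:ℝ)+1) * c (n+1) * ρ^n)
        ≤ (Cg * (2:ℝ)^e * (1-ρ)^e * ((n:ℝ)+1)^e * ν s) * (((n:ℝ)+1) * c (n+1) * ρ^n) := by
      refine mul_le_mul_of_nonneg_right step1 ?_
      have := hc (n+1); positivity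
    refine hterm.trans ?_
    have hre : ((n:ℝ)+1)^e = ((n:ℝ)+1)^(e-1) * ((n:ℝ)+1) := by
      rw [← Real.rpow_add_one hn1.ne']
      ring_nf
    calc (Cg * (2:ℝ)^e * (1-ρ)^e * ((n:ℝ)+1)^e * ν s) * (((n:ℝ)+1) * c (n+1) * ρ^n)
        = (Cg * (2:ℝ)^e * (1-ρ)^e * ((n:ℝ)+1)^(e-1) * ρ^n) * (((n:ℝ)+1)^2 * ν s * c (n+1)) := by
          rw [hre]; ring
    _ ≤ (Cg * (2:ℝ)^e * (1-ρ)^e * ((n:ℝ)+1)^(e-1) * ρ^n) * M := by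
        refine mul_le_mul_of_nonneg_left hcoef ?_
        positivity
    _ = M * (Cg * (2:ℝ)^e * (1-ρ)^e * ((n:ℝ)+1)^(e-1) * ρ^n) := by ring
  -- case analysis per n
  have hDE : ∀ n : ℕ, ν ρ * (((n:ℝ)+1) * c (n+1) * ρ^n) ≤
      M * ((if (1 - 1/((n:ℝ)+1)) ≤ ρ then C₁ * (2:ℝ)^a₁ * (1-ρ)^a₁ * ((n:ℝ)+1)^(a₁-1) * ρ^n else 0)
        + C₂ * (2:ℝ)^((m:ℝ)+1) * (1-ρ)^((m:ℝ)+1) * ((n:ℝ)+1)^((m:ℝ)+1-1) * ρ^n) := by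
    intro n
    have hsm := aux_sn_mem n
    have hn1 : (0:ℝ) < (n:ℝ)+1 := by positivity
    have hE0 : (0:ℝ) ≤ C₂ * (2:ℝ)^((m:ℝ)+1) * (1-ρ)^((m:ℝ)+1) * ((n:ℝ)+1)^((m:ℝ)+1-1) * ρ^n := by
      positivity
    rcases le_or_gt (1 - 1/((n:ℝ)+1)) ρ with hle|hlt
    · rw [if_pos hle]
      have hr := hD (1 - 1/((n:ℝ)+1)) hsm ρ hρm hle
      have hkey := key n C₁ a₁ hC₁.le ha₁ hr
      refine hkey.trans ?_
      exact mul_le_mul_of_nonneg_left (le_add_of_nonneg_right hE0) hM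
    · rw [if_neg (not_le.2 hlt)]
      have hr := hI ρ hρm (1 - 1/((n:ℝ)+1)) hsm hlt.le
      have hkey := key n C₂ ((m:ℝ)+1) hC₂.le (by positivity) hr
      refine hkey.trans ?_
      rw [zero_add]
  set N : ℕ := ⌈1/(1-ρ)⌉₊ with hNdef
  set D : ℕ → ℝ := fun n =>
    if (1 - 1/((n:ℝ)+1)) ≤ ρ then C₁ * (2:ℝ)^a₁ * (1-ρ)^a₁ * ((n:ℝ)+1)^(a₁-1) * ρ^n else 0
    with hDdef
  set E : ℕ → ℝ := fun n =>
    C₂ * (2:ℝ)^((m:ℝ)+1) * (1-ρ)^((m:ℝ)+1) * ((n:ℝ)+1)^((m:ℝ)+1-1) * ρ^n with hEdef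
  have hfin : ∀ n ∉ Finset.range N, D n = 0 := by
    intro n hn
    rw [hDdef]
    simp only
    rw [if_neg]
    intro hle
    apply hn
    have hn1 : (0:ℝ) < (n:ℝ)+1 := by positivity
    have h1 : 1 - ρ ≤ 1/((n:ℝ)+1) := by linarith
    have h2 : ((n:ℝ)+1) ≤ 1/(1-ρ) := by
      rw [le_div_iff₀ h1ρ]
      rw [le_div_iff₀ hn1] at h1
      linarith
    have h3 : ((n:ℝ)+1) ≤ (N:ℝ) := h2.trans (Nat.le_ceil _)
    have h4 : n + 1 ≤ N := by exact_mod_cast h3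
    exact Finset.mem_range.2 (by omega)
  have hDnonneg : ∀ n, 0 ≤ D n := by
    intro n
    rw [hDdef]
    simp only
    split
    · positivity
    · exact le_refl 0
  have hDsummable : Summable D := summable_of_ne_finset_zero hfin
  have hDbound : ∑' n, D n ≤ C₁ * (2:ℝ)^a₁ * ((2:ℝ)^a₁ * (1 + 1/a₁)) := by
    rw [tsum_eq_sum hfin]
    have step : ∀ n ∈ Finset.range N,
        D n ≤ (C₁ * (2:ℝ)^a₁ * (1-ρ)^a₁) * ((n:ℝ)+1)^(a₁-1) := by
      intro n _
      rw [hDdef]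
      simp only
      have hn1 : (0:ℝ) < (n:ℝ)+1 := by positivity
      split
      · have hρn : ρ^n ≤ 1 := pow_le_one₀ hρ0 hρ1.le
        calc C₁ * (2:ℝ)^a₁ * (1-ρ)^a₁ * ((n:ℝ)+1)^(a₁-1) * ρ^n
            ≤ C₁ * (2:ℝ)^a₁ * (1-ρ)^a₁ * ((n:ℝ)+1)^(a₁-1) * 1 := by
              refine mul_le_mul_of_nonneg_left hρn (by positivity)
        _ = (C₁ * (2:ℝ)^a₁ * (1-ρ)^a₁) * ((n:ℝ)+1)^(a₁-1) := by ring
      · positivity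
    have hNle : (1-ρ) * (N:ℝ) ≤ 2 := by
      have hceil : (N:ℝ) < 1/(1-ρ) + 1 := by
        rw [hNdef]
        exact Nat.ceil_lt_add_one (by positivity)
      have h1 : 1 ≤ 1/(1-ρ) := by rw [le_div_iff₀ h1ρ]; linarith
      have h2 : (1-ρ) * (1/(1-ρ)) = 1 := by field_simp
      nlinarith [Nat.cast_nonneg (α := ℝ) N]
    have hpow : (1-ρ)^a₁ * (N:ℝ)^a₁ ≤ (2:ℝ)^a₁ := by
      rw [← Real.mul_rpow h1ρ.le (Nat.cast_nonneg N)]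
      exact Real.rpow_le_rpow (by positivity) hNle ha₁.le
    calc ∑ n ∈ Finset.range N, D n
        ≤ ∑ n ∈ Finset.range N, (C₁ * (2:ℝ)^a₁ * (1-ρ)^a₁) * ((n:ℝ)+1)^(a₁-1) :=
          Finset.sum_le_sum step
    _ = (C₁ * (2:ℝ)^a₁ * (1-ρ)^a₁) * ∑ n ∈ Finset.range N, ((n:ℝ)+1)^(a₁-1) := by
          rw [Finset.mul_sum]
    _ ≤ (C₁ * (2:ℝ)^a₁ * (1-ρ)^a₁) * ((1 + 1/a₁) * (N:ℝ)^a₁) := by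
          refine mul_le_mul_of_nonneg_left (aux_sum_rpow_le ha₁ ha₁1 N) (by positivity)
    _ = (C₁ * (2:ℝ)^a₁ * (1 + 1/a₁)) * ((1-ρ)^a₁ * (N:ℝ)^a₁) := by ring
    _ ≤ (C₁ * (2:ℝ)^a₁ * (1 + 1/a₁)) * (2:ℝ)^a₁ := by
          refine mul_le_mul_of_nonneg_left hpow (by positivity)
    _ = C₁ * (2:ℝ)^a₁ * ((2:ℝ)^a₁ * (1 + 1/a₁)) := by ring
  have hEeq : ∀ n : ℕ, E n = (C₂ * (2:ℝ)^(m+1) * (1-ρ)^(m+1)) * (((n:ℝ)+1)^m * ρ^n) := by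
    intro n
    rw [hEdef]
    simp only
    have hn1 : (0:ℝ) < (n:ℝ)+1 := by positivity
    have e1 : ((m:ℝ)+1-1) = ((m:ℕ):ℝ) := by ring
    have e2 : ((n:ℝ)+1) ^ ((m:ℝ)+1-1) = ((n:ℝ)+1)^(m:ℕ) := by
      rw [e1, Real.rpow_natCast]
    have e3 : ((m:ℝ)+1) = (((m+1:ℕ)):ℝ) := by push_cast; ring
    have e4 : (2:ℝ) ^ ((m:ℝ)+1) = (2:ℝ)^(m+1:ℕ) := by rw [e3, Real.rpow_natCast]
    have e5 : (1-ρ) ^ ((m:ℝ)+1) = (1-ρ)^(m+1:ℕ) := by rw [e3, Real.rpow_natCast]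
    rw [e2, e4, e5]
    ring
  have hEsummable : Summable E := by
    rw [funext hEeq]
    exact (summable_add_one_pow_mul_geometric hρ0 hρ1 m).mul_left _
  have hEbound : ∑' n, E n ≤ C₂ * (2:ℝ)^(m+1) * (m.factorial : ℝ) := by
    have h1 : ∑' n, E n = (C₂ * (2:ℝ)^(m+1) * (1-ρ)^(m+1)) * ∑' n : ℕ, ((n:ℝ)+1)^m * ρ^n := by
      rw [funext hEeq, tsum_mul_left]
    rw [h1]
    have h2 := tsum_add_one_pow_mul_geometric_le hρ0 hρ1 m
    have h3 : (0:ℝ) < (1-ρ)^(m+1) := by positivity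
    calc (C₂ * (2:ℝ)^(m+1) * (1-ρ)^(m+1)) * ∑' n : ℕ, ((n:ℝ)+1)^m * ρ^n
        ≤ (C₂ * (2:ℝ)^(m+1) * (1-ρ)^(m+1)) * ((m.factorial:ℝ) / (1-ρ)^(m+1)) := by
          refine mul_le_mul_of_nonneg_left h2 (by positivity)
    _ = C₂ * (2:ℝ)^(m+1) * (m.factorial : ℝ) := by
          field_simp
  have hterm_nonneg : ∀ n : ℕ, 0 ≤ ν ρ * (((n:ℝ)+1) * c (n+1) * ρ^n) := by
    intro n
    have := hc (n+1)
    positivity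
  have hDE' : ∀ n : ℕ, ν ρ * (((n:ℝ)+1) * c (n+1) * ρ^n) ≤ M * (D n + E n) := hDE
  have hDEsummable : Summable (fun n => M * (D n + E n)) := (hDsummable.add hEsummable).mul_left M
  have hterm_summable : Summable (fun n : ℕ => ν ρ * (((n:ℝ)+1) * c (n+1) * ρ^n)) :=
    Summable.of_nonneg_of_le hterm_nonneg hDE' hDEsummable
  calc ν ρ * ∑' n : ℕ, ((n:ℝ)+1) * c (n+1) * ρ^n
      = ∑' n : ℕ, ν ρ * (((n:ℝ)+1) * c (n+1) * ρ^n) := tsum_mul_left.symm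
  _ ≤ ∑' n : ℕ, M * (D n + E n) := Summable.tsum_le_tsum hDE' hterm_summable hDEsummable
  _ = M * (∑' n, D n + ∑' n, E n) := by rw [← Summable.tsum_add hDsummable hEsummable, tsum_mul_left]
  _ ≤ M * (C₁ * (2:ℝ)^a₁ * ((2:ℝ)^a₁ * (1 + 1/a₁)) + C₂ * (2:ℝ)^(m+1) * (m.factorial : ℝ)) := by
      refine mul_le_mul_of_nonneg_left (add_le_add hDbound hEbound) hM
  _ = (C₁ * (2:ℝ)^a₁ * ((2:ℝ)^a₁ * (1 + 1/a₁)) + C₂ * (2:ℝ)^(m+1) * (m.factorial : ℝ)) * M := by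
      ring

lemma aux_deriv (c : ℕ → ℝ) (hc : ∀ n, 0 ≤ c n) (hmono : Antitone c)
    (f : ℂ → ℂ) (hf : ∀ z ∈ Metric.ball (0:ℂ) 1, HasSum (fun n : ℕ => (c n : ℂ) * z ^ n) (f z))
    {z : ℂ} (hz : z ∈ Metric.ball (0:ℂ) 1) :
    DifferentiableAt ℂ f z ∧
    HasSum (fun n : ℕ => ((((n:ℝ)+1) * c (n+1) : ℝ) : ℂ) * z ^ n) (deriv f z) := by
  have hz1 : ‖z‖ < 1 := by rwa [Metric.mem_ball, dist_zero_right] at hz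
  set r : ℝ := (‖z‖ + 1)/2 with hr
  have hz0 : (0:ℝ) ≤ ‖z‖ := norm_nonneg z
  have hr0 : (0:ℝ) < r := by rw [hr]; positivity
  have hr1 : r < 1 := by rw [hr]; linarith
  have hzr : ‖z‖ < r := by rw [hr]; linarith
  have hsum1 : Summable (fun n : ℕ => ((n:ℝ)+1) * r^n) := by
    have hnr : ‖r‖ < 1 := by rwa [Real.norm_eq_abs, abs_of_nonneg hr0.le]
    have h1 := summable_pow_mul_geometric_of_norm_lt_one 1 hnr
    have h2 := summable_geometric_of_lt_one hr0.le hr1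
    refine (h1.add h2).congr fun n => ?_
    simp only [pow_one]
    ring
  have hu : Summable (fun n : ℕ => c 0 * ((n:ℝ) * r^(n-1))) := by
    apply Summable.mul_left
    have h3 : Summable (fun n : ℕ => (((n+1:ℕ)):ℝ) * r^((n+1)-1)) := by
      refine hsum1.congr fun n => ?_
      push_cast
      simp
    exact (summable_nat_add_iff 1).1 h3
  set t : Set ℂ := Metric.ball (0:ℂ) r with ht
  have hmem : ∀ w : ℂ, w ∈ t ↔ ‖w‖ < r := fun w => by
    rw [ht, Metric.mem_ball, dist_zero_right]
  have hg : ∀ (n : ℕ) (w : ℂ), w ∈ t →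
      HasDerivAt (fun w : ℂ => (c n : ℂ) * w ^ n) ((c n : ℂ) * ((n:ℂ) * w ^ (n-1))) w :=
    fun n w _ => (hasDerivAt_pow n w).const_mul _
  have hg' : ∀ (n : ℕ) (w : ℂ), w ∈ t →
      ‖(c n : ℂ) * ((n:ℂ) * w ^ (n-1))‖ ≤ c 0 * ((n:ℝ) * r^(n-1)) := by
    intro n w hw
    rw [hmem] at hw
    rw [norm_mul, norm_mul, Complex.norm_natCast, Complex.norm_real, Real.norm_eq_abs,
      abs_of_nonneg (hc n), norm_pow]
    have h1 : ‖w‖^(n-1) ≤ r^(n-1) := pow_le_pow_left₀ (norm_nonneg w) hw.le _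
    have h2 : c n ≤ c 0 := hmono (Nat.zero_le n)
    refine mul_le_mul h2 (mul_le_mul_of_nonneg_left h1 n.cast_nonneg) (by positivity) (hc 0)
  have hg0 : Summable (fun n : ℕ => (c n : ℂ) * (0:ℂ) ^ n) := by
    apply summable_of_ne_finset_zero (s := ({0} : Finset ℕ))
    intro n hn
    simp only [Finset.mem_singleton] at hn
    simp [zero_pow hn]
  have H := hasDerivAt_tsum_of_isPreconnected hu Metric.isOpen_ball
      (convex_ball (0:ℂ) r).isPreconnected hg hg' (Metric.mem_ball_self hr0) hg0
      ((hmem z).2 hzr)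
  have heq : Set.EqOn f (fun w => ∑' n : ℕ, (c n : ℂ) * w ^ n) (Metric.ball (0:ℂ) 1) :=
    fun w hw => ((hf w hw).tsum_eq).symm
  have hfd : HasDerivAt f (∑' n : ℕ, (c n : ℂ) * ((n:ℂ) * z ^ (n-1))) z := by
    refine H.congr_of_eventuallyEq ?_
    exact Filter.eventuallyEq_of_mem (Metric.isOpen_ball.mem_nhds hz) heq
  refine ⟨hfd.differentiableAt, ?_⟩
  set g' : ℕ → ℂ := fun n => (c n : ℂ) * ((n:ℂ) * z^(n-1)) with hgdef
  have hsg : Summable g' := by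
    refine Summable.of_norm (Summable.of_nonneg_of_le (fun n => norm_nonneg _)
      (fun n => hg' n z ((hmem z).2 hzr)) hu)
  have hs3 : Summable (fun n => g' (n+1)) := (summable_nat_add_iff 1).2 hsg
  have htenum : ∑' n : ℕ, g' (n+1) = deriv f z := by
    rw [hfd.deriv, Summable.tsum_eq_zero_add hsg]
    have : g' 0 = 0 := by simp [hgdef]
    rw [this, zero_add]
  have hfinal := hs3.hasSum
  rw [htenum] at hfinal
  refine HasSum.congr_fun hfinal fun n => ?_
  rw [hgdef]
  simp only [Nat.add_sub_cancel]
  push_cast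
  ring

set_option maxHeartbeats 1000000 in
theorem stmt7 (ν : ℝ → ℝ) (a b : ℝ) (hν : IsNormal ν a b) :
    ∃ C > 0, ∀ (f : ℂ → ℂ) (c : ℕ → ℝ), (∀ n, 0 ≤ c n) → (Antitone c) →
      (∀ z ∈ Metric.ball (0:ℂ) 1, HasSum (fun n : ℕ => (c n : ℂ) * z ^ n) (f z)) →
      ((MemBloch ν f ↔
          ∃ M : ℝ, ∀ n : ℕ, 1 ≤ n → (n : ℝ) ^ 2 * ν (1 - 1 / (n:ℝ)) * c n ≤ M)
        ∧ (MemBloch ν f →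
            blochNorm ν f ≤
              C * (c 0 + ⨆ n : ℕ, ((n:ℝ) + 1) ^ 2 * ν (1 - 1 / ((n:ℝ) + 1)) * c (n + 1))
            ∧ c 0 + (⨆ n : ℕ, ((n:ℝ) + 1) ^ 2 * ν (1 - 1 / ((n:ℝ) + 1)) * c (n + 1)) ≤
                C * blochNorm ν f)) := by
  obtain ⟨K, hK, hcore⟩ := core_upper ν a b hν
  have hpos := hν.2.2.1
  refine ⟨max (K+1) 17, lt_of_lt_of_le (by norm_num) (le_max_right _ _), ?_⟩
  intro f c hc hmono hsum
  have hν0 : 0 < ν 0 := hpos 0 ⟨le_refl 0, one_pos⟩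
  have hball0 : (0:ℂ) ∈ Metric.ball (0:ℂ) 1 := Metric.mem_ball_self one_pos
  haveI hne : Nonempty (Metric.ball (0:ℂ) 1) := ⟨⟨0, hball0⟩⟩
  -- summability of the coefficient series
  have hA : ∀ ρ : ℝ, 0 ≤ ρ → ρ < 1 → Summable (fun n : ℕ => ((n:ℝ)+1) * c (n+1) * ρ^n) := by
    intro ρ h0 h1
    refine Summable.of_nonneg_of_le (fun n => by have := hc (n+1); positivity) (fun n => ?_)
      ((summable_add_one_pow_mul_geometric h0 h1 1).mul_left (c 0))
    have h2 : c (n+1) ≤ c 0 := hmono (Nat.zero_le _)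
    have h3 : (0:ℝ) ≤ ((n:ℝ)+1) * ρ^n := by positivity
    calc ((n:ℝ)+1) * c (n+1) * ρ^n ≤ ((n:ℝ)+1) * c 0 * ρ^n := by nlinarith
    _ = c 0 * (((n:ℝ)+1)^1 * ρ^n) := by ring
  have hder := fun (z : ℂ) (hz : z ∈ Metric.ball (0:ℂ) 1) => aux_deriv c hc hmono f hsum hz
  have hdiff : DifferentiableOn ℂ f (Metric.ball 0 1) :=
    fun z hz => ((hder z hz).1).differentiableWithinAt
  -- value at 0
  have hf0 : f 0 = (c 0 : ℂ) := by
    have h1 := hsum 0 hball0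
    have h2 : HasSum (fun n : ℕ => (c n : ℂ) * (0:ℂ)^n) ((c 0 : ℂ) * (0:ℂ)^0) :=
      hasSum_single 0 (fun n hn => by simp [zero_pow hn])
    simpa using h1.unique h2
  have hnf0 : ‖f 0‖ = c 0 := by
    rw [hf0, Complex.norm_real, Real.norm_eq_abs, abs_of_nonneg (hc 0)]
  -- pointwise norm bound for the derivative
  have hnorm : ∀ z : ℂ, z ∈ Metric.ball (0:ℂ) 1 →
      ‖deriv f z‖ ≤ ∑' n : ℕ, ((n:ℝ)+1) * c (n+1) * ‖z‖^n := by
    intro z hz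
    have hz1 : ‖z‖ < 1 := by rwa [Metric.mem_ball, dist_zero_right] at hz
    have hH := (hder z hz).2
    rw [← hH.tsum_eq]
    have hnormed : ∀ n : ℕ, ‖((((n:ℝ)+1) * c (n+1) : ℝ) : ℂ) * z ^ n‖
        = ((n:ℝ)+1) * c (n+1) * ‖z‖^n := by
      intro n
      rw [norm_mul, Complex.norm_real, Real.norm_eq_abs, norm_pow,
        abs_of_nonneg (by have := hc (n+1); positivity)]
    have hsn : Summable (fun n : ℕ => ‖((((n:ℝ)+1) * c (n+1) : ℝ) : ℂ) * z ^ n‖) := by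
      rw [funext hnormed]
      exact hA ‖z‖ (norm_nonneg z) hz1
    calc ‖∑' n : ℕ, ((((n:ℝ)+1) * c (n+1) : ℝ) : ℂ) * z ^ n‖
        ≤ ∑' n : ℕ, ‖((((n:ℝ)+1) * c (n+1) : ℝ) : ℂ) * z ^ n‖ := norm_tsum_le_tsum_norm hsn
    _ = ∑' n : ℕ, ((n:ℝ)+1) * c (n+1) * ‖z‖^n := tsum_congr hnormed
  -- derivative at a real point
  have hreal : ∀ ρ : ℝ, 0 ≤ ρ → ρ < 1 →
      ‖deriv f (ρ:ℂ)‖ = ∑' n : ℕ, ((n:ℝ)+1) * c (n+1) * ρ^n := by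
    intro ρ h0 h1
    have hmem : (ρ:ℂ) ∈ Metric.ball (0:ℂ) 1 := by
      rw [Metric.mem_ball, dist_zero_right, Complex.norm_real, Real.norm_eq_abs,
        abs_of_nonneg h0]
      exact h1
    have hH := (hder (ρ:ℂ) hmem).2
    have hRe : HasSum (fun n : ℕ => (((((n:ℝ)+1) * c (n+1) * ρ^n : ℝ)) : ℂ))
        ((∑' n : ℕ, ((n:ℝ)+1) * c (n+1) * ρ^n : ℝ) : ℂ) :=
      Complex.ofRealCLM.hasSum (hA ρ h0 h1).hasSum
    have hRe' : HasSum (fun n : ℕ => ((((n:ℝ)+1) * c (n+1) : ℝ) : ℂ) * (ρ:ℂ) ^ n)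
        ((∑' n : ℕ, ((n:ℝ)+1) * c (n+1) * ρ^n : ℝ) : ℂ) := by
      refine HasSum.congr_fun hRe fun n => ?_
      push_cast
      ring
    rw [hH.unique hRe', Complex.norm_real, Real.norm_eq_abs, abs_of_nonneg]
    exact tsum_nonneg (fun n => by have := hc (n+1); positivity)
  -- lower estimate
  have hlow : MemBloch ν f → ∀ N : ℕ, 1 ≤ N →
      (N:ℝ)^2 * ν (1 - 1/(N:ℝ)) * c N ≤
        16 * ⨆ z : Metric.ball (0:ℂ) 1, ν ‖(z : ℂ)‖ * ‖deriv f z‖ := by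
    intro hmb N hN1
    obtain ⟨_, hbdd⟩ := hmb
    set SV := ⨆ z : Metric.ball (0:ℂ) 1, ν ‖(z : ℂ)‖ * ‖deriv f z‖ with hSV
    have hsup0 : 0 ≤ ⨆ z : Metric.ball (0:ℂ) 1, ν ‖(z : ℂ)‖ * ‖deriv f z‖ := by
      refine le_trans ?_ (le_ciSup hbdd ⟨0, hball0⟩)
      have : (0:ℝ) ≤ ν ‖((0:ℂ))‖ * ‖deriv f 0‖ := by
        have h2 : ‖((0:ℂ))‖ = (0:ℝ) := by simp
        rw [h2]
        positivity
      simpa using this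
    rcases eq_or_lt_of_le hN1 with h1|h2
    · -- N = 1
      have hN : N = 1 := h1.symm
      subst hN
      have hd0 : ‖deriv f ((0:ℝ):ℂ)‖ = ∑' n : ℕ, ((n:ℝ)+1) * c (n+1) * (0:ℝ)^n :=
        hreal 0 (le_refl 0) one_pos
      have hts : ∑' n : ℕ, ((n:ℝ)+1) * c (n+1) * (0:ℝ)^n = c 1 := by
        have h2 : HasSum (fun n : ℕ => ((n:ℝ)+1) * c (n+1) * (0:ℝ)^n)
            ((((0:ℕ):ℝ)+1) * c (0+1) * (0:ℝ)^0) :=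
          hasSum_single 0 (fun n hn => by simp [zero_pow hn])
        rw [h2.tsum_eq]
        norm_num
      have hle : ν ‖((0:ℂ))‖ * ‖deriv f 0‖ ≤
          ⨆ z : Metric.ball (0:ℂ) 1, ν ‖(z : ℂ)‖ * ‖deriv f z‖ := le_ciSup hbdd ⟨0, hball0⟩
      have h3 : ‖((0:ℂ))‖ = (0:ℝ) := by simp
      have h4 : ((0:ℝ):ℂ) = (0:ℂ) := by norm_num
      rw [h4, hts] at hd0
      rw [h3, hd0] at hle
      have h5 : (1:ℝ)^2 * ν (1 - 1/(1:ℝ)) * c 1 = ν 0 * c 1 := by norm_num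
      push_cast
      rw [h5]
      nlinarith [hle, hsup0]
    · -- N ≥ 2
      have hN2 : 2 ≤ N := h2
      set rr : ℝ := 1 - 1/(N:ℝ) with hrr
      have hNpos : (0:ℝ) < (N:ℝ) := by
        have h0 : (0:ℕ) < N := by omega
        exact_mod_cast h0
      have hNc : (2:ℝ) ≤ (N:ℝ) := by exact_mod_cast hN2
      have hinv : 1/(N:ℝ) ≤ 1 := by
        rw [div_le_one hNpos]; linarith
      have hrr0 : 0 ≤ rr := by rw [hrr]; linarith
      have hrr1 : rr < 1 := by
        rw [hrr]
        have : 0 < 1/(N:ℝ) := by positivity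
        linarith
      have hmemz : ((rr:ℝ):ℂ) ∈ Metric.ball (0:ℂ) 1 := by
        rw [Metric.mem_ball, dist_zero_right, Complex.norm_real, Real.norm_eq_abs,
          abs_of_nonneg hrr0]
        exact hrr1
      have hd := hreal rr hrr0 hrr1
      have hterm : ∀ n ∈ Finset.range N,
          (c N * rr^N) * ((n:ℝ)+1) ≤ ((n:ℝ)+1) * c (n+1) * rr^n := by
        intro n hn
        rw [Finset.mem_range] at hn
        have h5 : c N ≤ c (n+1) := hmono (by omega)
        have h6 : rr^N ≤ rr^n := pow_le_pow_of_le_one hrr0 hrr1.le (by omega)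
        have h7 : (0:ℝ) ≤ (n:ℝ)+1 := by positivity
        have h8 : c N * rr^N ≤ c (n+1) * rr^n :=
          mul_le_mul h5 h6 (pow_nonneg hrr0 N) (hc (n+1))
        calc (c N * rr^N) * ((n:ℝ)+1) ≤ (c (n+1) * rr^n) * ((n:ℝ)+1) :=
              mul_le_mul_of_nonneg_right h8 h7
        _ = ((n:ℝ)+1) * c (n+1) * rr^n := by ring
      have hpartial := Summable.sum_le_tsum (Finset.range N)
        (fun i _ => by have := hc (i+1); positivity) (hA rr hrr0 hrr1)
      have hgauss : ∑ n ∈ Finset.range N, (c N * rr^N) * ((n:ℝ)+1)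
          = (c N * rr^N) * ((N:ℝ)*((N:ℝ)+1)/2) := by
        rw [← Finset.mul_sum, aux_gauss]
      have h8 : (c N * rr^N) * ((N:ℝ)*((N:ℝ)+1)/2) ≤ ∑' n : ℕ, ((n:ℝ)+1) * c (n+1) * rr^n := by
        rw [← hgauss]
        exact le_trans (Finset.sum_le_sum hterm) hpartial
      have hle : ν ‖((rr:ℝ):ℂ)‖ * ‖deriv f ((rr:ℝ):ℂ)‖ ≤
          ⨆ z : Metric.ball (0:ℂ) 1, ν ‖(z : ℂ)‖ * ‖deriv f z‖ :=
        le_ciSup hbdd ⟨((rr:ℝ):ℂ), hmemz⟩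
      rw [Complex.norm_real, Real.norm_eq_abs, abs_of_nonneg hrr0, hd] at hle
      have hpow := aux_pow_lower hN2
      have hexp : (1:ℝ)/8 ≤ Real.exp (-2) := by
        have h9 : Real.exp 2 ≤ 8 := by
          have h10 : Real.exp 2 = Real.exp 1 * Real.exp 1 := by
            rw [← Real.exp_add]; norm_num
          nlinarith [Real.exp_one_lt_d9, Real.exp_pos 1]
        have h11 := one_div_le_one_div_of_le (Real.exp_pos 2) h9
        rw [Real.exp_neg, inv_eq_one_div]
        exact h11
      have hrrN : (1:ℝ)/8 ≤ rr^N := le_trans hexp hpow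
      have hνrr : 0 < ν rr := hpos rr ⟨hrr0, hrr1⟩
      have hmul : ν rr * ((c N * rr^N) * ((N:ℝ)*((N:ℝ)+1)/2)) ≤
          ν rr * ∑' n : ℕ, ((n:ℝ)+1) * c (n+1) * rr^n :=
        mul_le_mul_of_nonneg_left h8 hνrr.le
      have hfin := le_trans hmul hle
      clear_value SV
      have e1 : (0:ℝ) ≤ (ν rr * c N) * ((N:ℝ)*((N:ℝ)+1)) * (8*rr^N - 1) := by
        have := mul_nonneg (mul_nonneg hνrr.le (hc N))
          (by positivity : (0:ℝ) ≤ (N:ℝ)*((N:ℝ)+1))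
        nlinarith [hrrN]
      have e2 : (0:ℝ) ≤ (ν rr * c N) * (((N:ℝ)*((N:ℝ)+1)) - (N:ℝ)^2) := by
        have h12 : (0:ℝ) ≤ ν rr * c N := mul_nonneg hνrr.le (hc N)
        nlinarith
      linarith [hfin, e1, e2]
  -- upper bound for the sup, given coefficient bound
  have hup : ∀ M : ℝ, 0 ≤ M →
      (∀ n : ℕ, ((n:ℝ)+1)^2 * ν (1 - 1/((n:ℝ)+1)) * c (n+1) ≤ M) →
      ∀ z : Metric.ball (0:ℂ) 1, ν ‖(z : ℂ)‖ * ‖deriv f (z:ℂ)‖ ≤ K * M := by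
    intro M hM0 hMn z
    obtain ⟨z, hz⟩ := z
    have hz1 : ‖z‖ < 1 := by rwa [Metric.mem_ball, dist_zero_right] at hz
    have hz0 : (0:ℝ) ≤ ‖z‖ := norm_nonneg z
    have hν1 : 0 < ν ‖z‖ := hpos ‖z‖ ⟨hz0, hz1⟩
    calc ν ‖z‖ * ‖deriv f z‖ ≤ ν ‖z‖ * ∑' n : ℕ, ((n:ℝ)+1) * c (n+1) * ‖z‖^n :=
          mul_le_mul_of_nonneg_left (hnorm z hz) hν1.le
    _ ≤ K * M := hcore M c hM0 hc hMn ‖z‖ hz0 hz1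
  constructor
  · constructor
    · intro hmb
      exact ⟨16 * ⨆ z : Metric.ball (0:ℂ) 1, ν ‖(z : ℂ)‖ * ‖deriv f z‖,
        fun n hn => hlow hmb n hn⟩
    · rintro ⟨M, hM⟩
      have hM0 : 0 ≤ M := by
        have h1 := hM 1 (le_refl 1)
        norm_num at h1
        nlinarith [mul_nonneg hν0.le (hc 1), h1]
      have hMn : ∀ n : ℕ, ((n:ℝ)+1)^2 * ν (1 - 1/((n:ℝ)+1)) * c (n+1) ≤ M := by
        intro n
        have h2 := hM (n+1) (by omega)
        push_cast at h2
        exact h2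
      refine ⟨hdiff, ⟨K * M, ?_⟩⟩
      rintro x ⟨z, rfl⟩
      exact hup M hM0 hMn z
  · intro hmb
    obtain ⟨_, hbdd⟩ := hmb
    set Ssup := ⨆ z : Metric.ball (0:ℂ) 1, ν ‖(z : ℂ)‖ * ‖deriv f z‖ with hSsup
    set S := ⨆ n : ℕ, ((n:ℝ) + 1) ^ 2 * ν (1 - 1 / ((n:ℝ) + 1)) * c (n + 1) with hS
    have hterm16 : ∀ n : ℕ, ((n:ℝ)+1)^2 * ν (1 - 1/((n:ℝ)+1)) * c (n+1) ≤ 16 * Ssup := by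
      intro n
      have h2 := hlow ⟨hdiff, hbdd⟩ (n+1) (by omega)
      push_cast at h2
      exact h2
    have hbddS : BddAbove (Set.range fun n : ℕ =>
        ((n:ℝ) + 1) ^ 2 * ν (1 - 1 / ((n:ℝ) + 1)) * c (n + 1)) := by
      refine ⟨16 * Ssup, ?_⟩
      rintro x ⟨n, rfl⟩
      exact hterm16 n
    have hSle : S ≤ 16 * Ssup := ciSup_le hterm16
    have htermS : ∀ n : ℕ, ((n:ℝ)+1)^2 * ν (1 - 1/((n:ℝ)+1)) * c (n+1) ≤ S :=
      fun n => le_ciSup hbddS n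
    have hS0 : 0 ≤ S := by
      refine le_trans ?_ (htermS 0)
      norm_num
      nlinarith [mul_nonneg hν0.le (hc 1)]
    have hSsup0 : 0 ≤ Ssup := by
      refine le_trans ?_ (le_ciSup hbdd ⟨0, hball0⟩)
      have h3 : ‖((0:ℂ))‖ = (0:ℝ) := by simp
      have : (0:ℝ) ≤ ν ‖((0:ℂ))‖ * ‖deriv f 0‖ := by
        rw [h3]
        positivity
      simpa using this
    have hsupK : Ssup ≤ K * S := by
      rw [hSsup]
      exact ciSup_le fun z => hup S hS0 htermS z
    have h1 : blochNorm ν f = c 0 + Ssup := by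
      unfold blochNorm
      rw [hnf0, hSsup]
    clear_value Ssup S
    constructor
    · rw [h1]
      have hC : K + 1 ≤ max (K+1) 17 := le_max_left _ _
      nlinarith [hsupK, hS0, hc 0, hK, hC, hSsup0,
        mul_nonneg (sub_nonneg.2 hC) (by linarith [hc 0, hS0] : (0:ℝ) ≤ c 0 + S),
        mul_nonneg hK.le (hc 0)]
    · rw [h1]
      have hC : (17:ℝ) ≤ max (K+1) 17 := le_max_right _ _
      nlinarith [hSle, hSsup0, hc 0, hC,
        mul_nonneg (sub_nonneg.2 hC) (by linarith [hc 0, hSsup0] : (0:ℝ) ≤ c 0 + Ssup)]
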